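/- Let S = (S_α) be a saturation sequence, N be a set of interpretations that is sequence-saturated relative to S, and I, J be interpretations. Then J ∈ I ⊕ N if and only if for every α, J|S_α ∈ (I|S_α) ⊕ (N|S_α). -/
import Mathlib


open Set

variable {A P : Type*}

/-- Restriction of an interpretation (set of atoms) to the predicate symbols in `U`. -/
def restr (pred : A → P) (U : Set P) (I : Set A) : Set A :=
  {p | p ∈ I ∧ pred p ∈ U}

/-- Restriction of a set of interpretations to the predicate symbols in `U`. -/
def restrM (pred : A → P) (U : Set P) (M : Set (Set A)) : Set (Set A) :=
  restr pred U '' M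

/-- `M` is saturated relative to `U`. -/
def saturated (pred : A → P) (U : Set P) (M : Set (Set A)) : Prop :=
  ∀ I : Set A, restr pred U I ∈ restrM pred U M → I ∈ M

/-- `σ_U(M)`: the set of all interpretations `I` with `I|U ∈ M|U`. -/
def sigmaSet (pred : A → P) (U : Set P) (M : Set (Set A)) : Set (Set A) :=
  {I | restr pred U I ∈ restrM pred U M}

/-- `M` is semi-saturated relative to `U`. -/
def semiSaturated (pred : A → P) (U : Set P) (M : Set (Set A)) : Prop :=
  ∀ I : Set A, restr pred U I ∈ restrM pred U M →
    restr pred Uᶜ I ∈ restrM pred Uᶜ M → I ∈ M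

/-- `M` is sequence-saturated relative to the family `S`. -/
def seqSaturated {ι : Type*} (pred : A → P) (S : ι → Set P) (M : Set (Set A)) : Prop :=
  ∀ I : Set A, (∀ α, restr pred (S α) I ∈ restrM pred (S α) M) → I ∈ M

/-- The difference in the interpretation of predicate symbol `Q` between `I` and `J`. -/
def diffP (pred : A → P) (Q : P) (I J : Set A) : Set A :=
  {p | p ∈ symmDiff I J ∧ pred p = Q}

/-- `J ≤_I J'` : `J` is at least as close to `I` as `J'`. -/
def closerLE (pred : A → P) (I J J' : Set A) : Prop :=
  ∀ Q : P, diffP pred Q I J ⊆ diffP pred Q I J'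

/-- `J <_I J'` : `J` is closer to `I` than `J'`. -/
def closerLT (pred : A → P) (I J J' : Set A) : Prop :=
  closerLE pred I J J' ∧ ¬ closerLE pred I J' J

/-- `I ⊕ N` for an interpretation `I` and a set of interpretations `N`. -/
def oplusI (pred : A → P) (I : Set A) (N : Set (Set A)) : Set (Set A) :=
  {J | J ∈ N ∧ ¬ ∃ J' ∈ N, closerLT pred I J' J}

/-- `M ⊕ N` for sets of interpretations `M`, `N`. -/
def oplus (pred : A → P) (M N : Set (Set A)) : Set (Set A) :=
  ⋃ I ∈ M, oplusI pred I N


lemma diffP_congr (pred : A → P) (Q : P) {I₁ I₂ J₁ J₂ : Set A}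
    (hI : ∀ p, pred p = Q → (p ∈ I₁ ↔ p ∈ I₂)) (hJ : ∀ p, pred p = Q → (p ∈ J₁ ↔ p ∈ J₂)) :
    diffP pred Q I₁ J₁ = diffP pred Q I₂ J₂ := by
  ext p
  by_cases hp : pred p = Q
  · simp [diffP, Set.mem_symmDiff, hp, hI p hp, hJ p hp]
  · simp [diffP, hp]

lemma diffP_restr (pred : A → P) (Q : P) (U : Set P) (I J : Set A) (hQ : Q ∈ U) :
    diffP pred Q (restr pred U I) (restr pred U J) = diffP pred Q I J :=
  diffP_congr pred Q (fun p hp => by simp [restr, hp, hQ]) (fun p hp => by simp [restr, hp, hQ])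

lemma diffP_restr_empty (pred : A → P) (Q : P) (U : Set P) (I J : Set A) (hQ : Q ∉ U) :
    diffP pred Q (restr pred U I) (restr pred U J) = ∅ := by
  ext p
  by_cases hp : pred p = Q
  · simp [diffP, Set.mem_symmDiff, restr, hp, hQ]
  · simp [diffP, hp]

theorem stmt_18 {ι : Type*} (pred : A → P) (S : ι → Set P)
    (hdisj : Pairwise (Function.onFun Disjoint S)) (hcov : ⋃ α, S α = Set.univ)
    (N : Set (Set A)) (hN : seqSaturated pred S N) (I J : Set A) :
    J ∈ oplusI pred I N ↔
      ∀ α, restr pred (S α) J ∈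
        oplusI pred (restr pred (S α) I) (restrM pred (S α) N) := by
  classical
  constructor
  · rintro ⟨hJN, hmin⟩ α
    refine ⟨⟨J, hJN, rfl⟩, ?_⟩
    rintro ⟨K', ⟨J'', hJ''N, rfl⟩, hle, hnle⟩
    set J' : Set A := {p | (pred p ∈ S α ∧ p ∈ J'') ∨ (pred p ∉ S α ∧ p ∈ J)} with hJ'def
    have hrα : restr pred (S α) J' = restr pred (S α) J'' := by
      ext p; simp only [restr, hJ'def, Set.mem_setOf_eq]; tauto
    have hrβ : ∀ β, β ≠ α → restr pred (S β) J' = restr pred (S β) J := by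
      intro β hβ
      have hd : ∀ p : A, pred p ∈ S β → pred p ∉ S α := by
        intro p hpβ
        exact fun hpα => Set.disjoint_left.mp (hdisj hβ) hpβ hpα
      ext p; simp only [restr, hJ'def, Set.mem_setOf_eq]
      constructor
      · rintro ⟨⟨h1, h2⟩ | ⟨h1, h2⟩, hpβ⟩
        · exact absurd h1 (hd p hpβ)
        · exact ⟨h2, hpβ⟩
      · rintro ⟨hpJ, hpβ⟩
        exact ⟨Or.inr ⟨hd p hpβ, hpJ⟩, hpβ⟩
    have hJ'N : J' ∈ N := by
      apply hN
      intro β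
      by_cases hβ : β = α
      · subst hβ; rw [hrα]; exact ⟨J'', hJ''N, rfl⟩
      · rw [hrβ β hβ]; exact ⟨J, hJN, rfl⟩
    -- J' agrees with J'' on S α and with J outside S α
    have eJ'1 : ∀ Q, Q ∈ S α → diffP pred Q I J' = diffP pred Q (restr pred (S α) I) (restr pred (S α) J'') := by
      intro Q hQ
      refine diffP_congr pred Q (fun p hp => by simp [restr, hp, hQ]) (fun p hp => ?_)
      simp only [hJ'def, Set.mem_setOf_eq, restr, hp, hQ]
      tauto
    have eJ : ∀ Q, Q ∈ S α → diffP pred Q I J = diffP pred Q (restr pred (S α) I) (restr pred (S α) J) := by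
      intro Q hQ
      exact (diffP_restr pred Q (S α) I J hQ).symm
    have eJ'2 : ∀ Q, Q ∉ S α → diffP pred Q I J' = diffP pred Q I J := by
      intro Q hQ
      refine diffP_congr pred Q (fun p hp => Iff.rfl) (fun p hp => ?_)
      simp only [hJ'def, Set.mem_setOf_eq]
      have : pred p ∉ S α := hp ▸ hQ
      tauto
    apply hmin
    refine ⟨J', hJ'N, ?_, ?_⟩
    · intro Q
      by_cases hQ : Q ∈ S α
      · rw [eJ'1 Q hQ, eJ Q hQ]; exact hle Q
      · rw [eJ'2 Q hQ]
    · intro hc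
      apply hnle
      intro Q
      by_cases hQ : Q ∈ S α
      · rw [← eJ Q hQ, ← eJ'1 Q hQ]; exact hc Q
      · rw [diffP_restr_empty pred Q (S α) I J hQ]
        exact Set.empty_subset _
  · intro h
    have hJN : J ∈ N := hN J (fun α => (h α).1)
    refine ⟨hJN, ?_⟩
    rintro ⟨J', hJ'N, hle, hnle⟩
    rw [closerLE] at hnle
    push_neg at hnle
    obtain ⟨Q, hQsub⟩ := hnle
    obtain ⟨p, hpJ, hpJ'⟩ := Set.not_subset.mp hQsub
    have hpQ : pred p = Q := hpJ.2
    obtain ⟨α, hQα⟩ : ∃ α, Q ∈ S α := by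
      have : Q ∈ ⋃ α, S α := hcov ▸ Set.mem_univ Q
      simpa using this
    apply (h α).2
    refine ⟨restr pred (S α) J', ⟨J', hJ'N, rfl⟩, ?_, ?_⟩
    · intro Q'
      by_cases hQ' : Q' ∈ S α
      · rw [diffP_restr pred Q' (S α) I J' hQ', diffP_restr pred Q' (S α) I J hQ']
        exact hle Q'
      · rw [diffP_restr_empty pred Q' (S α) I J' hQ']
        exact Set.empty_subset _
    · intro hc
      have := hc Q
      rw [diffP_restr pred Q (S α) I J hQα, diffP_restr pred Q (S α) I J' hQα] at this
      exact hpJ' (this hpJ)
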